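/- In the LDPJoinSketch mechanism, fix a target value d and line j. For an input value d^(i), define the debiased contribution to cell (j, h_j(d)) as M(j,h_j(d))^(i) = c_ε · k · B · ξ_j(d^(i)) · H_m[h_j(d^(i)), L] · H_m[L, h_j(d)] · 1{J = j}, where J ~ Uniform{0,...,k-1}, L ~ Uniform{0,...,m-1}, B ∈ {-1,+1} with Pr[B=1] = e^ε/(1+e^ε), all independent, and c_ε = (e^ε+1)/(e^ε-1). If d^(i) = d then E[M(j,h_j(d))^(i)] = ξ_j(d). -/

import Mathlib

/-- The Sylvester Hadamard matrix of order `2^t`, defined recursively by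
`H_1 = [1]` and `H_{2n} = [[H_n, H_n], [H_n, -H_n]]`. -/
noncomputable def Had : (t : ℕ) → Matrix (Fin (2^t)) (Fin (2^t)) ℝ
  | 0 => fun _ _ => 1
  | (t+1) => fun i j =>
      (if 2^t ≤ (i : ℕ) ∧ 2^t ≤ (j : ℕ) then (-1 : ℝ) else 1) *
        Had t ⟨(i : ℕ) % 2^t, Nat.mod_lt _ (by positivity)⟩
              ⟨(j : ℕ) % 2^t, Nat.mod_lt _ (by positivity)⟩

lemma had_symm : ∀ (t : ℕ) (i j : Fin (2^t)), Had t i j = Had t j i := by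
  intro t
  induction t with
  | zero => intro i j; rfl
  | succ t ih =>
    intro i j
    simp only [Had, and_comm, ih]

lemma had_mem : ∀ (t : ℕ) (i j : Fin (2^t)), Had t i j = 1 ∨ Had t i j = -1 := by
  intro t
  induction t with
  | zero => intro i j; left; rfl
  | succ t ih =>
    intro i j
    simp only [Had]
    rcases ih ⟨(i : ℕ) % 2^t, Nat.mod_lt _ (by positivity)⟩
        ⟨(j : ℕ) % 2^t, Nat.mod_lt _ (by positivity)⟩ with h1 | h1 <;>
      rw [h1] <;> split_ifs <;> simp

lemma had_sq (t : ℕ) (i j : Fin (2^t)) : Had t i j * Had t j i = 1 := by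
  rw [← had_symm]
  rcases had_mem t j i with h | h <;> rw [h] <;> norm_num

/-- The probability mass of one sample `(J, L, B)` of the client's randomness:
`J` uniform on `Fin k`, `L` uniform on `Fin (2^t)`, and the sign bit `B` equal to `+1`
(`true`) with probability `e^ε/(1+e^ε)` and `-1` (`false`) with probability `1/(1+e^ε)`. -/
noncomputable def sketchPMF (ε : ℝ) (k t : ℕ) (ω : Fin k × Fin (2^t) × Bool) : ℝ :=
  ((1 : ℝ)/k) * ((1 : ℝ)/2^t) *
    (if ω.2.2 then Real.exp ε / (1 + Real.exp ε) else 1 / (1 + Real.exp ε))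

/-- The debiased contribution `c_ε · k · B · s · H_m[a, L] · H_m[L, x] · 1{J = j}`
of an entry encoded at hash cell `a` with sign `s` to the sketch cell `(j, x)`. -/
noncomputable def contrib (ε : ℝ) (k t : ℕ) (a x : Fin (2^t)) (s : ℝ) (j : Fin k)
    (ω : Fin k × Fin (2^t) × Bool) : ℝ :=
  ((Real.exp ε + 1)/(Real.exp ε - 1)) * k * (if ω.2.2 then (1 : ℝ) else -1) * s *
    Had t a ω.2.1 * Had t ω.2.1 x * (if ω.1 = j then 1 else 0)

/-- If the entry's value equals the target value `d`, the expected debiased contribution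
to the sketch cell `(j, h_j(d))` equals `ξ_j(d)`. -/
theorem stmt_7 (ε : ℝ) (hε : 0 < ε) (t k : ℕ) (hk : 0 < k) (D : Type)
    (h : Fin k → D → Fin (2^t)) (ξ : Fin k → D → ℝ)
    (hξ : ∀ j d, ξ j d = 1 ∨ ξ j d = -1)
    (d : D) (j : Fin k) :
    ∑ ω : Fin k × Fin (2^t) × Bool,
        sketchPMF ε k t ω * contrib ε k t (h j d) (h j d) (ξ j d) j ω = ξ j d := by
  have he1 : Real.exp ε - 1 > 0 := by
    have := Real.add_one_le_exp ε
    linarith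
  set s := ξ j d with hs
  set a := h j d with ha
  rw [Fintype.sum_prod_type]
  rw [Finset.sum_eq_single j ?_ (by simp)]
  · rw [Fintype.sum_prod_type]
    have hL : ∀ L : Fin (2^t), ∑ B : Bool,
        sketchPMF ε k t (j, L, B) * contrib ε k t a a s j (j, L, B) = s / 2^t := by
      intro L
      have hsq := had_sq t a L
      have hk' : (k:ℝ) ≠ 0 := Nat.cast_ne_zero.mpr hk.ne'
      have h2 : ((2:ℝ)^t) ≠ 0 := by positivity
      have h1e : (1 : ℝ) + Real.exp ε ≠ 0 := by positivity
      simp only [sketchPMF, contrib, Fintype.sum_bool, if_true, if_false, ite_true, ite_false, Bool.false_eq_true]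
      field_simp
      linear_combination ((Real.exp ε + 1) * (Real.exp ε - 1) * s) * hsq
    rw [Finset.sum_congr rfl (fun L _ => hL L)]
    have h2 : ((2:ℝ)^t) ≠ 0 := by positivity
    simp [Finset.sum_const]
    field_simp
  · intro b _ hb
    simp [sketchPMF, contrib, hb]
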